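/- Let t₁ < 0 and let u ∈ C²(ℝ³ × [t₁, 0)) satisfy u_tt − Δu + u⁵ = 0 pointwise with E₀ := E(u; D(t₁)) < ∞. For every ε > 0 there exists a constant C = C(ε) ≥ 1 such that for every z₀ = (x₀, t₀) with t₁ ≤ t₀ < 0 and |x₀| ≤ |t₀|, and all times τ, σ with t₁ ≤ τ ≤ σ ≤ C·t₀, there holds ∫_{M_τ^σ(z₀)} A do ≥ ½ ∫_{M_τ^σ(z₀)} |u_ρ|² do − ε E₀, where on M(z₀), with y = x − x₀, one sets u_σ = (y/|y|)·∇u, u_ρ = (u_t − u_σ)/√2, and A = Q₀ + (u_t u)/t + u²/(2t²) − (y/|y|)·P₀ with Q₀ = ½|u_t|² + ½|∇u|² + |u|⁶/6 + ((x/t)·∇u) u_t and P₀ = (x/t)( ½|u_t|² − ½|∇u|² − |u|⁶/6 ) + ( u_t + (x/t)·∇u + u/t ) ∇u. -/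

import Mathlib

open MeasureTheory Filter Set

noncomputable section

/-- Euclidean 3-space. -/
abbrev E3 := EuclideanSpace ℝ (Fin 3)

/-- First time derivative `u_t` of `u = u(x,t)`. -/
noncomputable def ut (u : E3 × ℝ → ℝ) (x : E3) (t : ℝ) : ℝ := deriv (fun s => u (x, s)) t

/-- Second time derivative `u_tt` of `u = u(x,t)`. -/
noncomputable def utt (u : E3 × ℝ → ℝ) (x : E3) (t : ℝ) : ℝ :=
  deriv (fun s => deriv (fun r => u (x, r)) s) t

/-- Spatial gradient `∇u` of `u = u(x,t)`. -/
noncomputable def sgrad (u : E3 × ℝ → ℝ) (x : E3) (t : ℝ) : E3 := gradient (fun y => u (y, t)) x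

/-- Spatial Laplacian `Δu` of `u = u(x,t)`. -/
noncomputable def slap (u : E3 × ℝ → ℝ) (x : E3) (t : ℝ) : ℝ :=
  ∑ i : Fin 3, fderiv ℝ (fun y => fderiv ℝ (fun z => u (z, t)) y (EuclideanSpace.single i 1)) x
      (EuclideanSpace.single i 1)

/-- Energy density `e(u) = ½(|u_t|² + |∇u|²) + |u|⁶/6`. -/
noncomputable def eDen (u : E3 × ℝ → ℝ) (x : E3) (t : ℝ) : ℝ :=
  ((ut u x t) ^ 2 + ‖sgrad u x t‖ ^ 2) / 2 + |u (x, t)| ^ 6 / 6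

/-- The slab `ℝ³ × [t₁, 0)`. -/
def slab (t₁ : ℝ) : Set (E3 × ℝ) := {p : E3 × ℝ | t₁ ≤ p.2 ∧ p.2 < 0}

/-- The space-like section `D(t) = {x : |x| ≤ -t}` of the backward light cone with vertex
at the space-time origin. -/
def Dsec (t : ℝ) : Set E3 := Metric.closedBall (0 : E3) (-t)

/-- The truncated backward light cone `K_t = {(x,s) : t ≤ s < 0, |x| ≤ -s}` with vertex at
the space-time origin. -/
def Kcone (t : ℝ) : Set (E3 × ℝ) := {p : E3 × ℝ | t ≤ p.2 ∧ p.2 < 0 ∧ ‖p.1‖ ≤ -p.2}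

/-- Surface integral `∫_{M_T^S(z₀)} f do` over the truncated mantle
`M_T^S(z₀) = {(x,t) : |x - x₀| = t₀ - t, T ≤ t ≤ S}` of the backward light cone with vertex
`z₀ = (x₀,t₀)`, with respect to 3-dimensional Hausdorff (surface) measure on the mantle:
computed via the graph parametrization `y ↦ (x₀ + y, t₀ - |y|)`, whose area factor is `√2`. -/
noncomputable def mInt (x₀ : E3) (t₀ T S : ℝ) (f : E3 → ℝ → ℝ) : ℝ :=
  Real.sqrt 2 * ∫ y in {y : E3 | t₀ - S ≤ ‖y‖ ∧ ‖y‖ ≤ t₀ - T}, f (x₀ + y) (t₀ - ‖y‖)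

/-- The quantity `Q₀ = ½|u_t|² + ½|∇u|² + |u|⁶/6 + ((x/t)·∇u) u_t`. -/
noncomputable def Q0 (u : E3 × ℝ → ℝ) (x : E3) (t : ℝ) : ℝ :=
  (ut u x t) ^ 2 / 2 + ‖sgrad u x t‖ ^ 2 / 2 + |u (x, t)| ^ 6 / 6 +
    (inner ℝ (t⁻¹ • x) (sgrad u x t) : ℝ) * ut u x t

/-- The vector field
`P₀ = (x/t)(½|u_t|² − ½|∇u|² − |u|⁶/6) + (u_t + (x/t)·∇u + u/t) ∇u`. -/
noncomputable def P0 (u : E3 × ℝ → ℝ) (x : E3) (t : ℝ) : E3 :=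
  ((ut u x t) ^ 2 / 2 - ‖sgrad u x t‖ ^ 2 / 2 - |u (x, t)| ^ 6 / 6) • (t⁻¹ • x) +
    (ut u x t + (inner ℝ (t⁻¹ • x) (sgrad u x t) : ℝ) + u (x, t) / t) • sgrad u x t

/-- The derivative `u_σ = (y/|y|)·∇u` of `u` in the direction radial from `x₀`,
`y = x - x₀`. -/
noncomputable def uσ (x₀ : E3) (u : E3 × ℝ → ℝ) (x : E3) (t : ℝ) : ℝ :=
  inner ℝ ((‖x - x₀‖)⁻¹ • (x - x₀)) (sgrad u x t)

/-- The tangential derivative `u_ρ = (u_t − u_σ)/√2` along the mantle `M(z₀)`. -/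
noncomputable def uρ (x₀ : E3) (u : E3 × ℝ → ℝ) (x : E3) (t : ℝ) : ℝ :=
  (ut u x t - uσ x₀ u x t) / Real.sqrt 2

/-- The integrand `A = Q₀ + (u_t u)/t + u²/(2t²) − (y/|y|)·P₀`, `y = x - x₀`. -/
noncomputable def Afun (x₀ : E3) (u : E3 × ℝ → ℝ) (x : E3) (t : ℝ) : ℝ :=
  Q0 u x t + ut u x t * u (x, t) / t + (u (x, t)) ^ 2 / (2 * t ^ 2) -
    (inner ℝ ((‖x - x₀‖)⁻¹ • (x - x₀)) (P0 u x t) : ℝ)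

set_option maxHeartbeats 1000000

/-- core scalar inequality -/
lemma scalar_key (a s k wv m F G2 DT2 : ℝ)
    (hF : 0 ≤ F) (hGT2 : 0 ≤ G2 - s ^ 2) (hDT2 : 0 ≤ DT2)
    (hCS : (wv - s * k) ^ 2 ≤ DT2 * (G2 - s ^ 2))
    (hdn0 : 0 ≤ k + 1) (hdn4 : k + 1 ≤ 1 / 4) (hdt4 : DT2 ≤ (k + 1) / 4) :
    (a - s) ^ 2 / 4 ≤
      a ^ 2 / 2 + G2 / 2 + F + wv * a + a * m + m ^ 2 / 2 -
        ((a ^ 2 / 2 - G2 / 2 - F) * k + (a + wv + m) * s) := by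
  set q := a - s with hq
  set I := wv - s * k with hI
  set dn := k + 1 with hdn
  clear_value q I dn
  have h5 : (I * q) ^ 2 ≤ (dn / 4 * (G2 - s ^ 2)) * q ^ 2 := by
    have h1 : I ^ 2 ≤ dn / 4 * (G2 - s ^ 2) := le_trans hCS (by nlinarith)
    calc (I * q) ^ 2 = I ^ 2 * q ^ 2 := by ring
    _ ≤ (dn / 4 * (G2 - s ^ 2)) * q ^ 2 := by nlinarith [sq_nonneg q]
  have hIq : -(dn * (G2 - s ^ 2) / 2 + q ^ 2 / 8) ≤ I * q := by
    set W := dn * (G2 - s ^ 2) / 2 + q ^ 2 / 8 with hW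
    have hW0 : 0 ≤ W := by positivity
    have hsq : (I * q) ^ 2 ≤ W ^ 2 := by
      rw [hW]; nlinarith [h5, sq_nonneg (dn * (G2 - s ^ 2) / 2 - q ^ 2 / 8)]
    have habs : |I * q| ≤ W := by
      have := Real.sqrt_le_sqrt hsq
      rwa [Real.sqrt_sq_eq_abs, Real.sqrt_sq hW0] at this
    linarith [neg_abs_le (I * q)]
  have hiden : a ^ 2 / 2 + G2 / 2 + F + wv * a + a * m + m ^ 2 / 2 -
        ((a ^ 2 / 2 - G2 / 2 - F) * k + (a + wv + m) * s) - q ^ 2 / 4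
      = q ^ 2 / 4 + (q + m) ^ 2 / 2 + I * q - dn * q ^ 2 / 2 + dn * ((G2 - s ^ 2) / 2 + F) := by
    rw [hq, hI, hdn]; ring
  have p1 : dn * q ^ 2 ≤ (1 / 4) * q ^ 2 := mul_le_mul_of_nonneg_right hdn4 (sq_nonneg q)
  have p2 : 0 ≤ dn * F := mul_nonneg hdn0 hF
  have hq2 : (a - s) ^ 2 = q ^ 2 := by rw [hq]
  linarith only [hiden, hIq, p1, p2, sq_nonneg (q + m), hq2]

/-- Pointwise inequality on the deep part of the mantle. -/
lemma pointwise_key (u : E3 × ℝ → ℝ) (x₀ : E3) (t₀ : ℝ) (ht₀ : t₀ < 0)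
    (hx₀ : ‖x₀‖ ≤ -t₀) (y : E3) (hy : -7 * t₀ ≤ ‖y‖) :
    (1 / 2) * (uρ x₀ u (x₀ + y) (t₀ - ‖y‖)) ^ 2 ≤ Afun x₀ u (x₀ + y) (t₀ - ‖y‖) := by
  have hy0 : 0 < ‖y‖ := by linarith
  set t : ℝ := t₀ - ‖y‖ with hT
  have ht : t < 0 := by rw [hT]; linarith
  have htne : t ≠ 0 := ne_of_lt ht
  clear_value t
  simp only [uρ, Afun, Q0, P0, uσ, add_sub_cancel_left]
  set a : ℝ := ut u (x₀ + y) t with ha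
  set g : E3 := sgrad u (x₀ + y) t with hg
  set U : ℝ := u (x₀ + y, t) with hU
  set n : E3 := (‖y‖)⁻¹ • y with hn
  set v : E3 := t⁻¹ • (x₀ + y) with hv
  have hnn : ‖n‖ = 1 := by
    rw [hn, norm_smul, norm_inv, norm_norm, inv_mul_cancel₀ (ne_of_gt hy0)]
  clear_value n v
  set s : ℝ := (inner ℝ n g : ℝ) with hs
  set wv : ℝ := (inner ℝ v g : ℝ) with hwv
  set k : ℝ := (inner ℝ n v : ℝ) with hk
  set p : ℝ := (inner ℝ n x₀ : ℝ) with hp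
  clear_value a g U s wv k p
  have hny : (inner ℝ n y : ℝ) = ‖y‖ := by
    rw [hn, real_inner_smul_left, real_inner_self_eq_norm_sq, sq]
    field_simp
  have hkt : k * t = p + ‖y‖ := by
    rw [hk, hv, real_inner_smul_right, inner_add_right, hny, ← hp]
    field_simp
  have hpabs : |p| ≤ ‖x₀‖ := by
    rw [hp]
    have := abs_real_inner_le_norm n x₀
    rwa [hnn, one_mul] at this
  have hpb := abs_le.mp hpabs
  have e1 : (k + 1) * (-t) = -t₀ - p := by linear_combination -hkt - hT
  have hmt : 8 * (-t₀) ≤ -t := by rw [hT]; linarith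
  have hmt0 : (0 : ℝ) ≤ -t := by linarith
  have htpos : 0 < -t := by linarith
  have hrp : 0 ≤ -t₀ - p := by linarith only [hpb.2, hx₀]
  have hdn0 : 0 ≤ k + 1 := by
    by_contra h
    push_neg at h
    have h2 := mul_neg_of_neg_of_pos h htpos
    linarith only [e1, hrp, h2]
  have hdn4 : k + 1 ≤ 1 / 4 := by
    by_contra h
    push_neg at h
    have h2 : (1 / 4) * (-t) < (k + 1) * (-t) := mul_lt_mul_of_pos_right h htpos
    have h3 : -t₀ - p ≤ (1 / 4) * (-t) := by linarith only [hmt, hpb.1, hx₀]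
    linarith only [e1, h2, h3]
  set dt : E3 := v - k • n with hdt
  set gt : E3 := g - s • n with hgt
  clear_value dt gt
  have hvn : (inner ℝ v n : ℝ) = k := by rw [real_inner_comm]; exact hk.symm
  have hgn : (inner ℝ g n : ℝ) = s := by rw [real_inner_comm]; exact hs.symm
  have hkn : ‖k • n‖ ^ 2 = k ^ 2 := by
    rw [norm_smul, hnn, mul_one, Real.norm_eq_abs, sq_abs]
  have hsn : ‖s • n‖ ^ 2 = s ^ 2 := by
    rw [norm_smul, hnn, mul_one, Real.norm_eq_abs, sq_abs]
  have hdt2 : ‖dt‖ ^ 2 = ‖v‖ ^ 2 - k ^ 2 := by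
    rw [hdt, norm_sub_sq_real, real_inner_smul_right, hvn, hkn]; ring
  have hgt2 : ‖gt‖ ^ 2 = ‖g‖ ^ 2 - s ^ 2 := by
    rw [hgt, norm_sub_sq_real, real_inner_smul_right, hgn, hsn]; ring
  have hGT2 : 0 ≤ ‖g‖ ^ 2 - s ^ 2 := by rw [← hgt2]; positivity
  have hxyin : (inner ℝ x₀ y : ℝ) = ‖y‖ * p := by
    rw [hp, hn, real_inner_smul_left, real_inner_comm]
    field_simp
  have hxsq : ‖x₀ + y‖ ^ 2 = ‖x₀‖ ^ 2 + 2 * (‖y‖ * p) + ‖y‖ ^ 2 := by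
    rw [norm_add_sq_real, hxyin]
  have hv2 : ‖v‖ ^ 2 * t ^ 2 = ‖x₀ + y‖ ^ 2 := by
    have hvv : ‖v‖ = |t|⁻¹ * ‖x₀ + y‖ := by
      rw [hv, norm_smul, Real.norm_eq_abs, abs_inv]
    rw [hvv, mul_pow, ← sq_abs t]
    have : |t| ≠ 0 := by simpa using htne
    field_simp
  have hDT2t : ‖dt‖ ^ 2 * t ^ 2 = ‖x₀‖ ^ 2 - p ^ 2 := by
    rw [hdt2]
    linear_combination hv2 + hxsq - (k * t + p + ‖y‖) * hkt
  have ht2 : (0 : ℝ) < t ^ 2 := by positivity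
  have hxr : ‖x₀‖ ^ 2 ≤ t₀ ^ 2 := by
    have h1 := pow_le_pow_left₀ (norm_nonneg x₀) hx₀ 2
    have h2 : (-t₀) ^ 2 = t₀ ^ 2 := by ring
    linarith only [h1, h2]
  have h2r : ‖x₀‖ ^ 2 - p ^ 2 ≤ (-t₀ - p) * (2 * (-t₀)) := by
    linarith only [hxr, sq_nonneg (t₀ + p)]
  have key : (k + 1) * (-t) * (2 * (-t₀)) ≤ (k + 1) * (-t) * ((-t) / 4) := by
    apply mul_le_mul_of_nonneg_left _ (mul_nonneg hdn0 hmt0)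
    linarith
  have e2 : (-t₀ - p) * (2 * (-t₀)) = (k + 1) * (-t) * (2 * (-t₀)) := by rw [e1]
  have step1 : ‖x₀‖ ^ 2 - p ^ 2 ≤ (k + 1) * (-t) * ((-t) / 4) := by
    calc ‖x₀‖ ^ 2 - p ^ 2 ≤ (-t₀ - p) * (2 * (-t₀)) := h2r
    _ = (k + 1) * (-t) * (2 * (-t₀)) := e2
    _ ≤ (k + 1) * (-t) * ((-t) / 4) := key
  have step2 : (k + 1) * (-t) * ((-t) / 4) = ((k + 1) / 4) * t ^ 2 := by ring
  have hdt4 : ‖dt‖ ^ 2 ≤ (k + 1) / 4 := by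
    exact (mul_le_mul_iff_left₀ ht2).mp (by linarith only [hDT2t, step1, step2])
  -- Cauchy–Schwarz
  have hin : (inner ℝ dt gt : ℝ) = wv - s * k := by
    rw [hdt, hgt]
    simp only [inner_sub_left, inner_sub_right, real_inner_smul_left, real_inner_smul_right,
      real_inner_self_eq_norm_sq, hnn]
    rw [← hwv, ← hs, hvn]
    ring
  have hCS : (wv - s * k) ^ 2 ≤ ‖dt‖ ^ 2 * (‖g‖ ^ 2 - s ^ 2) := by
    have h := abs_real_inner_le_norm dt gt
    have h2 : (inner ℝ dt gt : ℝ) ^ 2 ≤ (‖dt‖ * ‖gt‖) ^ 2 := by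
      rw [← sq_abs]; exact pow_le_pow_left₀ (abs_nonneg _) h 2
    rw [hin, mul_pow, hgt2] at h2
    exact h2
  -- rewrite goal into scalar form
  have hinP : (inner ℝ n ((a ^ 2 / 2 - ‖g‖ ^ 2 / 2 - |U| ^ 6 / 6) • v +
      (a + wv + U / t) • g) : ℝ) =
      (a ^ 2 / 2 - ‖g‖ ^ 2 / 2 - |U| ^ 6 / 6) * k + (a + wv + U / t) * s := by
    rw [inner_add_right, real_inner_smul_right, real_inner_smul_right, ← hk, ← hs]
  rw [hinP]
  have hlhs : (1 / 2) * ((a - s) / Real.sqrt 2) ^ 2 = (a - s) ^ 2 / 4 := by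
    rw [div_pow, Real.sq_sqrt (by norm_num : (0 : ℝ) ≤ 2)]
    ring
  rw [hlhs]
  set m : ℝ := U / t with hm
  clear_value m
  have hmr1 : a * U / t = a * m := by rw [hm]; ring
  have hmr2 : U ^ 2 / (2 * t ^ 2) = m ^ 2 / 2 := by rw [hm, div_pow, div_div, mul_comm 2 (t ^ 2)]
  rw [hmr1, hmr2]
  have hF : (0 : ℝ) ≤ |U| ^ 6 / 6 := by positivity
  exact scalar_key a s k wv m (|U| ^ 6 / 6) (‖g‖ ^ 2) (‖dt‖ ^ 2) hF hGT2
    (by positivity) hCS hdn0 hdn4 hdt4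

/-- The value of `Afun` as a function of the point and the field values. -/
noncomputable def AfunVal (x₀ x : E3) (t : ℝ) (a : ℝ) (g : E3) (U : ℝ) : ℝ :=
  a ^ 2 / 2 + ‖g‖ ^ 2 / 2 + |U| ^ 6 / 6 + (inner ℝ (t⁻¹ • x) g : ℝ) * a + a * U / t +
      U ^ 2 / (2 * t ^ 2) -
    (inner ℝ ((‖x - x₀‖)⁻¹ • (x - x₀))
      ((a ^ 2 / 2 - ‖g‖ ^ 2 / 2 - |U| ^ 6 / 6) • (t⁻¹ • x) +
        (a + (inner ℝ (t⁻¹ • x) g : ℝ) + U / t) • g) : ℝ)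

lemma Afun_eq_val (x₀ : E3) (u : E3 × ℝ → ℝ) (x : E3) (t : ℝ) :
    Afun x₀ u x t = AfunVal x₀ x t (ut u x t) (sgrad u x t) (u (x, t)) := rfl

lemma slab_eq (t₁ : ℝ) : slab t₁ = (univ : Set E3) ×ˢ Ico t₁ 0 := by
  ext p; simp [slab, Set.mem_prod, mem_Ico]

lemma afun_integrableOn (t₁ : ℝ) (u : E3 × ℝ → ℝ) (hu : ContDiffOn ℝ 2 u (slab t₁))
    (x₀ : E3) (t₀ τ σ : ℝ) (hτ : t₁ ≤ τ) (hσ0 : σ < 0) (hσt : σ < t₀) :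
    IntegrableOn (fun y : E3 => Afun x₀ u (x₀ + y) (t₀ - ‖y‖))
      {y : E3 | t₀ - σ ≤ ‖y‖ ∧ ‖y‖ ≤ t₀ - τ} := by
  set reg : Set E3 := {y : E3 | t₀ - σ ≤ ‖y‖ ∧ ‖y‖ ≤ t₀ - τ} with hreg
  have hregeq : reg = (fun y : E3 => ‖y‖) ⁻¹' (Icc (t₀ - σ) (t₀ - τ)) := by
    ext y; simp [hreg, mem_Icc]
  have hclosed : IsClosed reg := by
    rw [hregeq]; exact isClosed_Icc.preimage continuous_norm
  have hcompact : IsCompact reg := by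
    apply Metric.isCompact_of_isClosed_isBounded hclosed
    apply (Metric.isBounded_closedBall (x := (0 : E3)) (r := t₀ - τ)).subset
    intro y hy
    simpa [Metric.mem_closedBall, dist_zero_right] using hy.2
  -- the within-derivative
  have huniq : UniqueDiffOn ℝ (slab t₁) := by
    rw [slab_eq]; exact uniqueDiffOn_univ.prod (uniqueDiffOn_Ico t₁ 0)
  set D : E3 × ℝ → (E3 × ℝ) →L[ℝ] ℝ := fderivWithin ℝ u (slab t₁) with hD
  have hDcont : ContinuousOn D (slab t₁) :=
    hu.continuousOn_fderivWithin huniq (by norm_num)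
  set z : E3 → E3 × ℝ := fun y => (x₀ + y, t₀ - ‖y‖) with hz
  have hzcont : Continuous z := by
    apply Continuous.prodMk
    · exact continuous_const.add continuous_id
    · exact continuous_const.sub continuous_norm
  have hmaps : MapsTo z reg (slab t₁) := by
    intro y hy
    simp only [hz, slab, Set.mem_setOf_eq]
    exact ⟨by linarith [hy.2], by linarith [hy.1]⟩
  set A : E3 → ℝ := fun y => (D (z y)) ((0 : E3), (1 : ℝ)) with hA
  set Gv : E3 → E3 := fun y => (InnerProductSpace.toDual ℝ E3).symm
    ((D (z y)).comp (ContinuousLinearMap.inl ℝ E3 ℝ)) with hGv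
  have hDz : ContinuousOn (fun y => D (z y)) reg := hDcont.comp hzcont.continuousOn hmaps
  have hAcont : ContinuousOn A reg := hDz.clm_apply continuousOn_const
  have hGvcont : ContinuousOn Gv reg := by
    have h1 : Continuous fun T : (E3 × ℝ) →L[ℝ] ℝ =>
        (InnerProductSpace.toDual ℝ E3).symm (T.comp (ContinuousLinearMap.inl ℝ E3 ℝ)) := by
      apply (LinearIsometryEquiv.continuous _).comp
      exact ((ContinuousLinearMap.compL ℝ E3 (E3 × ℝ) ℝ).flip
        (ContinuousLinearMap.inl ℝ E3 ℝ)).continuous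
    exact h1.comp_continuousOn hDz
  have hUcont : ContinuousOn (fun y => u (z y)) reg :=
    hu.continuousOn.comp hzcont.continuousOn hmaps
  -- continuity of the substitute integrand
  set G : E3 → ℝ := fun y =>
    AfunVal x₀ (x₀ + y) (t₀ - ‖y‖) (A y) (Gv y) (u (z y)) with hG
  have htne : ∀ y ∈ reg, t₀ - ‖y‖ ≠ 0 := by
    intro y hy; have := hy.1; intro h; nlinarith [hy.1]
  have hyne : ∀ y ∈ reg, ‖y‖ ≠ 0 := by
    intro y hy; have h1 := hy.1; intro h; rw [h] at h1; linarith
  have hGcont : ContinuousOn G reg := by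
    have ct : ContinuousOn (fun y : E3 => t₀ - ‖y‖) reg :=
      (continuous_const.sub continuous_norm).continuousOn
    have cti : ContinuousOn (fun y : E3 => (t₀ - ‖y‖)⁻¹) reg := ct.inv₀ htne
    have cx : ContinuousOn (fun y : E3 => x₀ + y) reg :=
      (continuous_const.add continuous_id).continuousOn
    have cv : ContinuousOn (fun y : E3 => (t₀ - ‖y‖)⁻¹ • (x₀ + y)) reg := cti.smul cx
    have cyn : ContinuousOn (fun y : E3 => (‖(x₀ + y) - x₀‖)⁻¹ • ((x₀ + y) - x₀)) reg := by
      refine ContinuousOn.smul (f := fun y : E3 => (‖(x₀ + y) - x₀‖)⁻¹)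
        (g := fun y : E3 => (x₀ + y) - x₀) ?_ ?_
      · apply ContinuousOn.inv₀
        · exact (continuous_norm.comp (continuous_id.sub continuous_const)).comp_continuousOn
            cx
        · intro y hy
          simpa [add_sub_cancel_left] using hyne y hy
      · exact (continuous_id.sub continuous_const).comp_continuousOn cx
    have cnormg : ContinuousOn (fun y : E3 => ‖Gv y‖) reg := hGvcont.norm
    have cU : ContinuousOn (fun y : E3 => u (z y)) reg := hUcont
    have cinn1 : ContinuousOn (fun y : E3 =>
        (inner ℝ ((t₀ - ‖y‖)⁻¹ • (x₀ + y)) (Gv y) : ℝ)) reg := cv.inner hGvcont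
    apply ContinuousOn.sub
    · apply ContinuousOn.add
      · apply ContinuousOn.add
        · apply ContinuousOn.add
          · apply ContinuousOn.add
            · exact ((hAcont.pow 2).div_const 2).add ((cnormg.pow 2).div_const 2)
            · exact ((cU.abs.pow 6).div_const 6)
          · exact cinn1.mul hAcont
        · exact (hAcont.mul cU).div ct htne
      · refine (cU.pow 2).div (continuousOn_const.mul (ct.pow 2)) ?_
        intro y hy
        have := htne y hy
        positivity
    · exact cyn.inner (((hAcont.pow 2).div_const 2 |>.sub ((cnormg.pow 2).div_const 2)
        |>.sub ((cU.abs.pow 6).div_const 6)).smul cv |>.add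
        (((hAcont.add cinn1).add (cU.div ct htne)).smul hGvcont))
  have hGint : IntegrableOn G reg := hGcont.integrableOn_compact hcompact
  -- equality off the bottom sphere
  have hEq : ∀ y ∈ reg, ‖y‖ ≠ t₀ - t₁ → Afun x₀ u (x₀ + y) (t₀ - ‖y‖) = G y := by
    intro y hy hyne'
    have hylt : ‖y‖ < t₀ - t₁ := lt_of_le_of_ne (le_trans hy.2 (by linarith)) hyne'
    have hmem : slab t₁ ∈ nhds (z y) := by
      rw [mem_nhds_iff]
      refine ⟨(univ : Set E3) ×ˢ Ioo t₁ 0, ?_, isOpen_univ.prod isOpen_Ioo, ?_⟩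
      · rw [slab_eq]
        exact Set.prod_mono (subset_refl _) Ioo_subset_Ico_self
      · refine ⟨trivial, ?_, ?_⟩
        · simp only [hz]; linarith
        · simp only [hz]; linarith [hy.1]
    have hDiff : DifferentiableAt ℝ u (z y) :=
      (hu.contDiffAt hmem).differentiableAt (by norm_num)
    have hDeq : fderiv ℝ u (z y) = D (z y) := (fderivWithin_of_mem_nhds hmem).symm
    -- time derivative
    have h3 : HasFDerivAt (fun s : ℝ => ((x₀ + y : E3), s))
        (ContinuousLinearMap.inr ℝ E3 ℝ) (t₀ - ‖y‖) := hasFDerivAt_prodMk_right _ _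
    have h1 : HasDerivAt (fun s => u ((x₀ + y : E3), s)) (A y) (t₀ - ‖y‖) := by
      have h2 := hDiff.hasFDerivAt.comp_hasDerivAt (t₀ - ‖y‖) h3.hasDerivAt
      simp only [ContinuousLinearMap.inr_apply] at h2
      rw [hDeq] at h2
      exact h2
    have hut : ut u (x₀ + y) (t₀ - ‖y‖) = A y := h1.deriv
    -- spatial gradient
    have h4 : HasFDerivAt (fun w : E3 => u (w, t₀ - ‖y‖))
        ((fderiv ℝ u (z y)).comp (ContinuousLinearMap.inl ℝ E3 ℝ)) (x₀ + y) := by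
      exact HasFDerivAt.comp (x₀ + y) hDiff.hasFDerivAt
        (hasFDerivAt_prodMk_left (x₀ + y) (t₀ - ‖y‖))
    have h5 : HasGradientAt (fun w : E3 => u (w, t₀ - ‖y‖)) (Gv y) (x₀ + y) := by
      rw [hasGradientAt_iff_hasFDerivAt]
      have he : (InnerProductSpace.toDual ℝ E3) (Gv y) =
          (D (z y)).comp (ContinuousLinearMap.inl ℝ E3 ℝ) :=
        LinearIsometryEquiv.apply_symm_apply _ _
      rw [he, ← hDeq]
      exact h4
    have hsg : sgrad u (x₀ + y) (t₀ - ‖y‖) = Gv y := h5.gradient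
    rw [Afun_eq_val, hut, hsg]
  have hsph : volume {y : E3 | ‖y‖ = t₀ - t₁} = 0 := by
    have h : {y : E3 | ‖y‖ = t₀ - t₁} = Metric.sphere (0 : E3) (t₀ - t₁) := by
      ext w; simp [mem_sphere_zero_iff_norm]
    rw [h]
    exact Measure.addHaar_sphere volume 0 _
  have hae1 : ∀ᵐ y : E3 ∂volume, ‖y‖ ≠ t₀ - t₁ := by
    rw [ae_iff]
    simpa only [not_not] using hsph
  have hae : G =ᵐ[volume.restrict reg] fun y => Afun x₀ u (x₀ + y) (t₀ - ‖y‖) := by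
    rw [Filter.EventuallyEq, ae_restrict_iff' hclosed.measurableSet]
    filter_upwards [hae1] with y hy1 hy2
    exact (hEq y hy2 hy1).symm
  exact hGint.congr hae

/-- Lemma 4.5: for every `ε > 0` there is `C = C(ε) ≥ 1` such that for all
vertices `z₀ = (x₀,t₀)` in the backward cone and all `t₁ ≤ τ ≤ σ ≤ C·t₀`,
`∫_{M_τ^σ(z₀)} A do ≥ ½ ∫_{M_τ^σ(z₀)} |u_ρ|² do − ε E₀`. -/
theorem statement13 (t₁ : ℝ) (ht₁ : t₁ < 0) (u : E3 × ℝ → ℝ)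
    (hu : ContDiffOn ℝ 2 u (slab t₁))
    (heq : ∀ p ∈ slab t₁, utt u p.1 p.2 - slap u p.1 p.2 + (u p) ^ 5 = 0)
    (hE : IntegrableOn (fun x => eDen u x t₁) (Dsec t₁)) :
    ∀ ε : ℝ, 0 < ε →
      ∃ C : ℝ, 1 ≤ C ∧
        ∀ (x₀ : E3) (t₀ : ℝ), t₁ ≤ t₀ → t₀ < 0 → ‖x₀‖ ≤ |t₀| →
          ∀ τ σ : ℝ, t₁ ≤ τ → τ ≤ σ → σ ≤ C * t₀ →
            mInt x₀ t₀ τ σ (Afun x₀ u) ≥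
              (1 / 2) * mInt x₀ t₀ τ σ (fun x t => (uρ x₀ u x t) ^ 2) -
                ε * ∫ x in Dsec t₁, eDen u x t₁ := by
  intro ε hε
  refine ⟨8, by norm_num, ?_⟩
  intro x₀ t₀ ht₁t₀ ht₀ hx₀ τ σ hτ hτσ hσ
  have hxr : ‖x₀‖ ≤ -t₀ := by rwa [abs_of_neg ht₀] at hx₀
  have hσ8 : σ ≤ 8 * t₀ := by linarith
  have hσ0 : σ < 0 := by linarith
  have hσt : σ < t₀ := by linarith
  set reg : Set E3 := {y : E3 | t₀ - σ ≤ ‖y‖ ∧ ‖y‖ ≤ t₀ - τ} with hreg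
  have hregmeas : MeasurableSet reg := by
    have : reg = (fun y : E3 => ‖y‖) ⁻¹' (Icc (t₀ - σ) (t₀ - τ)) := by
      ext y; simp [hreg, mem_Icc]
    rw [this]
    exact (isClosed_Icc.preimage continuous_norm).measurableSet
  have hE0 : 0 ≤ ∫ x in Dsec t₁, eDen u x t₁ := by
    apply integral_nonneg
    intro x
    simp only [eDen]
    positivity
  have hptwise : ∀ y ∈ reg, (1 / 2) * (uρ x₀ u (x₀ + y) (t₀ - ‖y‖)) ^ 2 ≤
      Afun x₀ u (x₀ + y) (t₀ - ‖y‖) := by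
    intro y hy
    exact pointwise_key u x₀ t₀ ht₀ hxr y (by linarith [hy.1])
  have hint : IntegrableOn (fun y : E3 => Afun x₀ u (x₀ + y) (t₀ - ‖y‖)) reg :=
    afun_integrableOn t₁ u hu x₀ t₀ τ σ hτ hσ0 hσt
  have hmono : ∫ y in reg, (1 / 2) * (uρ x₀ u (x₀ + y) (t₀ - ‖y‖)) ^ 2 ≤
      ∫ y in reg, Afun x₀ u (x₀ + y) (t₀ - ‖y‖) := by
    apply integral_mono_of_nonneg
    · exact Filter.Eventually.of_forall fun y => by positivity
    · exact hint
    · exact (ae_restrict_iff' hregmeas).mpr (Filter.Eventually.of_forall hptwise)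
  have h12 : ∫ y in reg, (1 / 2) * (uρ x₀ u (x₀ + y) (t₀ - ‖y‖)) ^ 2 =
      (1 / 2) * ∫ y in reg, (uρ x₀ u (x₀ + y) (t₀ - ‖y‖)) ^ 2 :=
    integral_const_mul _ _
  have hs2 : (0 : ℝ) ≤ Real.sqrt 2 := Real.sqrt_nonneg 2
  have hEps : 0 ≤ ε * ∫ x in Dsec t₁, eDen u x t₁ := mul_nonneg hε.le hE0
  rw [mInt, mInt]
  have hkey : Real.sqrt 2 * ((1 / 2) * ∫ y in reg, (uρ x₀ u (x₀ + y) (t₀ - ‖y‖)) ^ 2) ≤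
      Real.sqrt 2 * ∫ y in reg, Afun x₀ u (x₀ + y) (t₀ - ‖y‖) := by
    apply mul_le_mul_of_nonneg_left _ hs2
    rw [← h12]
    exact hmono
  rw [ge_iff_le]
  calc (1 / 2) * (Real.sqrt 2 * ∫ y in reg, (uρ x₀ u (x₀ + y) (t₀ - ‖y‖)) ^ 2) -
        ε * ∫ x in Dsec t₁, eDen u x t₁
      ≤ (1 / 2) * (Real.sqrt 2 * ∫ y in reg, (uρ x₀ u (x₀ + y) (t₀ - ‖y‖)) ^ 2) := by
        linarith
    _ = Real.sqrt 2 * ((1 / 2) * ∫ y in reg, (uρ x₀ u (x₀ + y) (t₀ - ‖y‖)) ^ 2) := by ring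
    _ ≤ Real.sqrt 2 * ∫ y in reg, Afun x₀ u (x₀ + y) (t₀ - ‖y‖) := hkey
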